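/- Let P ⊆ ℝ², let G, W ⊆ P be finite sets such that conv(AGP(G,W)) is full-dimensional, and let g ∈ G. Then the inequality x_g ≥ 0 is a facet of conv(AGP(G,W)) if and only if every witness sees at least two guards other than g, i.e., |V(w) ∩ (G \ {g})| ≥ 2 for all w ∈ W. -/
import Mathlib
open scoped Classical

/-- Points of the Euclidean plane. -/
abbrev Pt := EuclideanSpace ℝ (Fin 2)

/-- Visibility region of `p` in `P`. -/
def Vis (P : Set Pt) (p : Pt) : Set Pt := {q ∈ P | segment ℝ p q ⊆ P}

/-- Feasible binary solutions of `AGP(G,W)`. -/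
def Feasible (P : Set Pt) (G W : Finset Pt) : Set (↥G → ℝ) :=
  {x | (∀ g, x g = 0 ∨ x g = 1) ∧
    ∀ w ∈ W, ∃ g : ↥G, (g : Pt) ∈ Vis P w ∧ x g = 1}

/-- `a ⬝ x ≥ b` is a facet of `conv F ⊆ ℝ^G`: it is valid for all feasible solutions,
and the face where it holds with equality has affine dimension `|G| - 1`. -/
def IsFacet (G : Finset Pt) (F : Set (↥G → ℝ)) (a : ↥G → ℝ) (b : ℝ) : Prop :=
  (∀ x ∈ F, b ≤ ∑ g : ↥G, a g * x g) ∧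
  Module.finrank ℝ
      (affineSpan ℝ {x | x ∈ convexHull ℝ F ∧ ∑ g : ↥G, a g * x g = b}).direction
    = G.card - 1

section aux
variable {ι : Type*} [Fintype ι]

/-- The `j`-th standard basis vector. -/
noncomputable def epw (j : ι) : ι → ℝ := fun k => if k = j then 1 else 0

omit [Fintype ι] in
lemma vectorSpan_le_ker (s : Set (ι → ℝ)) (i : ι) (c : ℝ)
    (h : ∀ x ∈ s, x i = c) :
    vectorSpan ℝ s ≤ LinearMap.ker (LinearMap.proj (R := ℝ) (φ := fun _ : ι => ℝ) i) := by
  rw [vectorSpan_def]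
  refine Submodule.span_le.2 ?_
  rintro v ⟨x, hx, y, hy, rfl⟩
  simp [LinearMap.mem_ker, h x hx, h y hy]

lemma finrank_ker_proj (i : ι) :
    Module.finrank ℝ (LinearMap.ker (LinearMap.proj (R := ℝ) (φ := fun _ : ι => ℝ) i))
      = Fintype.card ι - 1 := by
  have h := LinearMap.finrank_range_add_finrank_ker
    (LinearMap.proj (R := ℝ) (φ := fun _ : ι => ℝ) i)
  have hsurj : Function.Surjective (LinearMap.proj (R := ℝ) (φ := fun _ : ι => ℝ) i) := by
    intro c; exact ⟨fun k => if k = i then c else 0, by simp⟩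
  rw [LinearMap.range_eq_top.2 hsurj, finrank_top] at h
  simp only [Module.finrank_self, Module.finrank_pi] at h ⊢
  omega

lemma finrank_ker_proj2 (i j : ι) (hij : i ≠ j) :
    Module.finrank ℝ (LinearMap.ker
      ((LinearMap.proj (R := ℝ) (φ := fun _ : ι => ℝ) i).prod (LinearMap.proj j)))
      = Fintype.card ι - 2 := by
  set f := (LinearMap.proj (R := ℝ) (φ := fun _ : ι => ℝ) i).prod (LinearMap.proj j) with hf
  have h := LinearMap.finrank_range_add_finrank_ker f
  have hsurj : Function.Surjective f := by
    rintro ⟨a, b⟩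
    refine ⟨fun k => if k = i then a else if k = j then b else 0, ?_⟩
    simp [hf, hij.symm]
  rw [LinearMap.range_eq_top.2 hsurj, finrank_top] at h
  simp only [Module.finrank_pi, Module.finrank_prod, Module.finrank_self] at h ⊢
  omega

lemma ker_proj_le (i : ι) (K : Submodule ℝ (ι → ℝ))
    (h : ∀ j, j ≠ i → epw j ∈ K) :
    LinearMap.ker (LinearMap.proj (R := ℝ) (φ := fun _ : ι => ℝ) i) ≤ K := by
  intro v hv
  have hv0 : v i = 0 := hv
  have hrep : v = ∑ j, v j • epw j := by
    funext k
    simp only [Finset.sum_apply, Pi.smul_apply, epw, smul_eq_mul, mul_ite, mul_one, mul_zero]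
    rw [Finset.sum_ite_eq Finset.univ k v]
    simp
  rw [hrep]
  refine Submodule.sum_mem _ fun j _ => ?_
  by_cases hj : j = i
  · subst hj; rw [hv0, zero_smul]; exact Submodule.zero_mem _
  · exact Submodule.smul_mem _ _ (h j hj)

end aux

lemma sum_indicator_mul {G : Finset Pt} (g : ↥G) (x : ↥G → ℝ) :
    ∑ g' : ↥G, (if g' = g then (1:ℝ) else 0) * x g' = x g := by
  simp [ite_mul, Finset.sum_ite_eq', Finset.mem_univ]

theorem nonneg_facet_iff (P : Set Pt) (G W : Finset Pt) (hG : ↑G ⊆ P) (hW : ↑W ⊆ P)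
    (hfull : affineSpan ℝ (convexHull ℝ (Feasible P G W)) = ⊤)
    (g : ↥G) :
    IsFacet G (Feasible P G W) (fun g' => if g' = g then 1 else 0) 0 ↔
      ∀ w ∈ W, 2 ≤ (Vis P w ∩ (↑G \ {(g : Pt)})).ncard := by
  have hFaceEq : {x : ↥G → ℝ | x ∈ convexHull ℝ (Feasible P G W) ∧
      ∑ g' : ↥G, (if g' = g then (1:ℝ) else 0) * x g' = 0}
      = {x | x ∈ convexHull ℝ (Feasible P G W) ∧ x g = 0} := by
    ext x; rw [Set.mem_setOf_eq, Set.mem_setOf_eq, sum_indicator_mul]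
  have hevalg : IsLinearMap ℝ (fun x : ↥G → ℝ => x g) := ⟨fun a b => rfl, fun c a => rfl⟩
  constructor
  · rintro ⟨-, hdim⟩ w hw
    rw [hFaceEq] at hdim
    by_contra hlt
    push_neg at hlt
    have hSsub : Vis P w ∩ (↑G \ {(g : Pt)}) ⊆ ↑G := fun p hp => hp.2.1
    have hSfin : (Vis P w ∩ (↑G \ {(g : Pt)})).Finite := G.finite_toSet.subset hSsub
    rcases Set.eq_empty_or_nonempty (Vis P w ∩ (↑G \ {(g : Pt)})) with hSe | ⟨p, hp⟩
    · -- every feasible x has x g = 1, contradicting full-dimensionality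
      have hall : ∀ x ∈ Feasible P G W, x g = 1 := by
        rintro x ⟨hx01, hxcov⟩
        obtain ⟨g', hvis, hg1⟩ := hxcov w hw
        have hgg : g' = g := by
          by_contra hne
          have hm : (g' : Pt) ∈ Vis P w ∩ (↑G \ {(g : Pt)}) :=
            ⟨hvis, g'.2, fun h => hne (Subtype.ext h)⟩
          rw [hSe] at hm; exact hm
        rwa [hgg] at hg1
      have hconv : convexHull ℝ (Feasible P G W) ⊆ {x : ↥G → ℝ | x g = 1} :=
        convexHull_min hall (convex_hyperplane hevalg 1)
      have htop : vectorSpan ℝ (convexHull ℝ (Feasible P G W)) = ⊤ := by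
        rw [← direction_affineSpan, hfull, AffineSubspace.direction_top]
      have hle := vectorSpan_le_ker (convexHull ℝ (Feasible P G W)) g 1
        (fun x hx => hconv hx)
      rw [htop, top_le_iff] at hle
      have hmem : epw g ∈ LinearMap.ker
          (LinearMap.proj (R := ℝ) (φ := fun _ : ↥G => ℝ) g) := by
        rw [hle]; trivial
      simp [LinearMap.mem_ker, epw] at hmem
    · -- S = {p}; face lies in x g = 0 ∧ x h = 1
      obtain ⟨hpv, hpG, hpg⟩ := hp
      have hSone : Vis P w ∩ (↑G \ {(g : Pt)}) = {p} := by
        refine Set.eq_singleton_iff_unique_mem.2 ⟨⟨hpv, hpG, hpg⟩, fun q hq => ?_⟩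
        by_contra hne
        have h1n := Set.one_lt_ncard_iff hSfin |>.2 ⟨q, p, hq, ⟨hpv, hpG, hpg⟩, hne⟩
        exact absurd h1n (not_lt.2 (Nat.lt_succ_iff.mp hlt))
      set h : ↥G := ⟨p, hpG⟩ with hh
      have hhg : h ≠ g := fun he => hpg (congrArg Subtype.val he)
      have hevalh : IsLinearMap ℝ (fun x : ↥G → ℝ => x h) := ⟨fun a b => rfl, fun c a => rfl⟩
      have key1 : ∀ x ∈ Feasible P G W, (1:ℝ) ≤ x g + x h := by
        rintro x ⟨hx01, hxcov⟩
        rcases hx01 g with hg0 | hg1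
        · obtain ⟨g', hvis, hg1⟩ := hxcov w hw
          have hne : g' ≠ g := fun he => by rw [he, hg0] at hg1; norm_num at hg1
          have hmem : (g' : Pt) ∈ Vis P w ∩ (↑G \ {(g : Pt)}) :=
            ⟨hvis, g'.2, fun he => hne (Subtype.ext he)⟩
          rw [hSone] at hmem
          have hgh : g' = h := Subtype.ext hmem
          rw [hg0, ← hgh, hg1]; norm_num
        · rcases hx01 h with h0 | h0 <;> rw [hg1, h0] <;> norm_num
      have key2 : ∀ x ∈ Feasible P G W, x h ≤ 1 := by
        rintro x ⟨hx01, -⟩; rcases hx01 h with h0 | h0 <;> rw [h0] <;> norm_num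
      have hconv : convexHull ℝ (Feasible P G W) ⊆
          {x : ↥G → ℝ | (1:ℝ) ≤ x g + x h} ∩ {x : ↥G → ℝ | x h ≤ 1} := by
        refine convexHull_min (fun x hx => ⟨key1 x hx, key2 x hx⟩) (Convex.inter ?_ ?_)
        · exact convex_halfSpace_ge
            ⟨fun a b => by simp; ring, fun c a => by simp; ring⟩ 1
        · exact convex_halfSpace_le hevalh 1
      have hface : ∀ x ∈ {x : ↥G → ℝ | x ∈ convexHull ℝ (Feasible P G W) ∧ x g = 0},
          x g = 0 ∧ x h = 1 := by
        rintro x ⟨hx, hxg⟩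
        obtain ⟨h1, h2⟩ := hconv hx
        simp only [Set.mem_setOf_eq] at h1 h2
        refine ⟨hxg, le_antisymm h2 ?_⟩
        rw [hxg] at h1; linarith
      have hle : vectorSpan ℝ {x : ↥G → ℝ | x ∈ convexHull ℝ (Feasible P G W) ∧ x g = 0}
          ≤ LinearMap.ker ((LinearMap.proj (R := ℝ) (φ := fun _ : ↥G => ℝ) g).prod
            (LinearMap.proj h)) := by
        rw [LinearMap.ker_prod]
        exact le_inf (vectorSpan_le_ker _ g 0 (fun x hx => (hface x hx).1))
          (vectorSpan_le_ker _ h 1 (fun x hx => (hface x hx).2))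
      have hcard : 2 ≤ G.card := by
        rw [← Fintype.card_coe]
        exact Fintype.one_lt_card_iff.2 ⟨g, h, hhg.symm⟩
      have hfr : Module.finrank ℝ
          (affineSpan ℝ {x : ↥G → ℝ | x ∈ convexHull ℝ (Feasible P G W) ∧ x g = 0}).direction
          ≤ G.card - 2 := by
        rw [direction_affineSpan]
        calc Module.finrank ℝ _ ≤ _ := Submodule.finrank_mono hle
        _ = Fintype.card ↥G - 2 := finrank_ker_proj2 g h (Ne.symm hhg)
        _ = G.card - 2 := by rw [Fintype.card_coe]
      rw [hdim] at hfr
      clear hdim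
      omega
  · intro h2
    constructor
    · rintro x ⟨hx01, -⟩
      rw [sum_indicator_mul]
      rcases hx01 g with h0 | h0 <;> rw [h0] <;> norm_num
    · rw [hFaceEq, direction_affineSpan]
      set Fc := {x : ↥G → ℝ | x ∈ convexHull ℝ (Feasible P G W) ∧ x g = 0} with hFc
      have hub : vectorSpan ℝ Fc ≤ LinearMap.ker
          (LinearMap.proj (R := ℝ) (φ := fun _ : ↥G => ℝ) g) :=
        vectorSpan_le_ker _ g 0 (fun x hx => hx.2)
      -- the all-ones-except-g point
      have hx0 : (fun g' : ↥G => if g' = g then (0:ℝ) else 1) ∈ Fc := by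
        refine ⟨subset_convexHull ℝ _
          ⟨fun g' => by by_cases hg' : g' = g <;> simp [hg'], ?_⟩, by simp⟩
        intro w hw
        have h2w := h2 w hw
        have hne : (Vis P w ∩ (↑G \ {(g : Pt)})).Nonempty := by
          apply Set.nonempty_of_ncard_ne_zero; omega
        obtain ⟨p, hpv, hpG, hpg⟩ := hne
        have hneg : (⟨p, hpG⟩ : ↥G) ≠ g := fun he => hpg (congrArg Subtype.val he)
        exact ⟨⟨p, hpG⟩, hpv, by simp [hneg]⟩
      have hsingle : ∀ h' : ↥G, h' ≠ g → epw h' ∈ vectorSpan ℝ Fc := by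
        intro h' hne
        have hx1 : (fun g' : ↥G => if g' = g ∨ g' = h' then (0:ℝ) else 1) ∈ Fc := by
          refine ⟨subset_convexHull ℝ _
            ⟨fun g' => by by_cases hg' : g' = g ∨ g' = h' <;> simp [hg'], ?_⟩, by simp⟩
          intro w hw
          have h2w := h2 w hw
          have hSfin : (Vis P w ∩ (↑G \ {(g : Pt)})).Finite :=
            G.finite_toSet.subset (fun p hp => hp.2.1)
          obtain ⟨a, b, ha, hb, hab⟩ := (Set.one_lt_ncard_iff hSfin).1 (by omega)
          have hex : ∃ p, p ∈ Vis P w ∩ (↑G \ {(g : Pt)}) ∧ p ≠ (h' : Pt) := by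
            by_cases hah : a = (h' : Pt)
            · exact ⟨b, hb, fun he => hab (by rw [hah, he])⟩
            · exact ⟨a, ha, hah⟩
          obtain ⟨p, ⟨hpv, hpG, hpg⟩, hph⟩ := hex
          have hn1 : (⟨p, hpG⟩ : ↥G) ≠ g := fun he => hpg (congrArg Subtype.val he)
          have hn2 : (⟨p, hpG⟩ : ↥G) ≠ h' := fun he => hph (congrArg Subtype.val he)
          refine ⟨⟨p, hpG⟩, hpv, by simp [hn1, hn2]⟩
        have hdiff := vsub_mem_vectorSpan ℝ hx0 hx1
        have heq : (fun g' : ↥G => if g' = g then (0:ℝ) else 1) -ᵥ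
            (fun g' : ↥G => if g' = g ∨ g' = h' then (0:ℝ) else 1) = epw h' := by
          funext g'
          simp only [epw, vsub_eq_sub, Pi.sub_apply]
          by_cases hg' : g' = g
          · subst hg'; simp [Ne.symm hne]
          · by_cases hh' : g' = h' <;> simp [hg', hh', hne]
        rwa [heq] at hdiff
      have hlb := ker_proj_le g (vectorSpan ℝ Fc) hsingle
      have hker : vectorSpan ℝ Fc = LinearMap.ker
          (LinearMap.proj (R := ℝ) (φ := fun _ : ↥G => ℝ) g) := le_antisymm hub hlb
      rw [hker, finrank_ker_proj, Fintype.card_coe]
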